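/- The efficient Vickrey mechanism combined with a pay-as-bid (apply the efficient Vickrey rule when v ∈ Ṽ and the pay-as-bid rule when v ∉ Ṽ) is the unique agent welfare optimal mechanism in the class F of mechanisms satisfying egalitarian-equivalence, non-obvious manipulability, efficiency, individual rationality, and no subsidy: it belongs to F, it welfare dominates every mechanism in F, and any other mechanism in F fails to welfare dominate it. -/

import Mathlib

open scoped NNReal
open Finset

noncomputable section

/-- The `k`-th highest valuation (1-indexed); junk value `0` if `k` is out of range. -/
def vk (n k : ℕ) (v : Fin n → ℝ≥0) : ℝ≥0 :=
  if h : 0 < k ∧ k ≤ n then v (Tuple.sort v ⟨n - k, by omega⟩) else 0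

/-- `v ∈ Ṽ` : the `(m+1)`-th through `n`-th highest valuations are all equal. -/
def tilde (n m : ℕ) (v : Fin n → ℝ≥0) : Prop :=
  ∀ k, m + 1 ≤ k → k ≤ n → vk n k v = vk n (m + 1) v

/-- A mechanism: object assignment and transfers, allocating at most `m` objects. -/
structure Mechanism (n m : ℕ) where
  x : (Fin n → ℝ≥0) → Fin n → Bool
  t : (Fin n → ℝ≥0) → Fin n → ℝ
  feasible : ∀ v, (Finset.univ.filter fun i => x v i = true).card ≤ m

/-- Quasi-linear utility of a bundle `(x, t)` for valuation `w`. -/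
def util (z : Bool × ℝ) (w : ℝ≥0) : ℝ := (if z.1 then (w : ℝ) else 0) - z.2

def Mechanism.bundle {n m : ℕ} (f : Mechanism n m) (v : Fin n → ℝ≥0) (i : Fin n) :
    Bool × ℝ := (f.x v i, f.t v i)

def IR {n m : ℕ} (f : Mechanism n m) : Prop :=
  ∀ v i, 0 ≤ util (f.bundle v i) (v i)

def NoSubsidy {n m : ℕ} (f : Mechanism n m) : Prop :=
  ∀ v i, 0 ≤ f.t v i

def StrategyProof {n m : ℕ} (f : Mechanism n m) : Prop :=
  ∀ v (i : Fin n) (w : ℝ≥0),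
    util (f.bundle (Function.update v i w) i) (v i) ≤ util (f.bundle v i) (v i)

def EgalitarianEquivalent {n m : ℕ} (f : Mechanism n m) : Prop :=
  ∀ v, ∃ z₀ : Bool × ℝ, ∀ i, util (f.bundle v i) (v i) = util z₀ (v i)

def EnvyFree {n m : ℕ} (f : Mechanism n m) : Prop :=
  ∀ v i j, util (f.bundle v j) (v i) ≤ util (f.bundle v i) (v i)

/-- `x` maximizes total valuation among feasible object allocations. -/
def EffAlloc (n m : ℕ) (v : Fin n → ℝ≥0) (x : Fin n → Bool) : Prop :=
  ∀ y : Fin n → Bool, (Finset.univ.filter fun i => y i = true).card ≤ m →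
    (∑ i, if y i then (v i : ℝ) else 0) ≤ ∑ i, if x i then (v i : ℝ) else 0

def Efficient {n m : ℕ} (f : Mechanism n m) : Prop :=
  ∀ v, EffAlloc n m v (f.x v)

/-- Non-obvious manipulability: no report improves the sup or the inf (over others'
valuations) of an agent's utility compared to truth-telling. -/
def NOM {n m : ℕ} (f : Mechanism n m) : Prop :=
  ∀ (i : Fin n) (vi vi' : ℝ≥0),
    (⨆ w : Fin n → ℝ≥0, util (f.bundle (Function.update w i vi') i) vi) ≤
      (⨆ w : Fin n → ℝ≥0, util (f.bundle (Function.update w i vi) i) vi) ∧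
    (⨅ w : Fin n → ℝ≥0, util (f.bundle (Function.update w i vi') i) vi) ≤
      (⨅ w : Fin n → ℝ≥0, util (f.bundle (Function.update w i vi) i) vi)

/-- Winner selection function. -/
structure WSF (n m : ℕ) where
  τ : (Fin n → ℝ≥0) → Finset (Fin n)
  empty_of_not_tilde : ∀ v, ¬ tilde n m v → τ v = ∅
  mem_le : ∀ v i, i ∈ τ v → vk n (m + 1) v ≤ v i
  mem_of_lt : ∀ v, τ v ≠ ∅ → ∀ i, vk n (m + 1) v < v i → i ∈ τ v
  card_le : ∀ v, (τ v).card ≤ m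

def Uncompromising {n m : ℕ} (T : WSF n m) : Prop :=
  ∀ v (i : Fin n) (w : ℝ≥0), i ∈ T.τ v → vk n (m + 1) v < w →
    i ∈ T.τ (Function.update v i w)

/-- `f` is the `τ`-Vickrey mechanism combined with the no-trade. -/
def IsTauVickrey {n m : ℕ} (f : Mechanism n m) (T : WSF n m) : Prop :=
  ∀ v i, (f.x v i = true ↔ i ∈ T.τ v) ∧
    f.t v i = if i ∈ T.τ v then (vk n (m + 1) v : ℝ) else 0

/-- An efficient-Vickrey allocation at `v`: efficient object allocation, winners pay
the `(m+1)`-th highest valuation, losers pay nothing. -/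
def IsEVAlloc (n m : ℕ) (v : Fin n → ℝ≥0) (z : Fin n → Bool × ℝ) : Prop :=
  (Finset.univ.filter fun i => (z i).1 = true).card ≤ m ∧
  EffAlloc n m v (fun i => (z i).1) ∧
  ∀ i, (z i).2 = if (z i).1 then (vk n (m + 1) v : ℝ) else 0

/-- A pay-as-bid allocation at `v`: efficient object allocation, winners pay their
own valuation, losers pay nothing. -/
def IsPABAlloc (n m : ℕ) (v : Fin n → ℝ≥0) (z : Fin n → Bool × ℝ) : Prop :=
  (Finset.univ.filter fun i => (z i).1 = true).card ≤ m ∧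
  EffAlloc n m v (fun i => (z i).1) ∧
  ∀ i, (z i).2 = if (z i).1 then (v i : ℝ) else 0

/-- The Vickrey mechanism: winners are exactly the agents with `v i > v^{m+1}`,
winners pay `v^{m+1}`, losers get and pay nothing. -/
def IsVickrey {n m : ℕ} (f : Mechanism n m) : Prop :=
  ∀ v i, (f.x v i = true ↔ vk n (m + 1) v < v i) ∧
    f.t v i = if f.x v i then (vk n (m + 1) v : ℝ) else 0

/-- The efficient Vickrey mechanism combined with a pay-as-bid. -/
def IsEVPAB {n m : ℕ} (f : Mechanism n m) : Prop :=
  ∀ v, (tilde n m v → IsEVAlloc n m v (f.bundle v)) ∧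
    (¬ tilde n m v → IsPABAlloc n m v (f.bundle v))

/-- The class `F` of mechanisms. -/
def MemF {n m : ℕ} (f : Mechanism n m) : Prop :=
  EgalitarianEquivalent f ∧ NOM f ∧ Efficient f ∧ IR f ∧ NoSubsidy f

lemma vk_eq {n : ℕ} (v : Fin n → ℝ≥0) (k : ℕ) (h1 : 0 < k) (h2 : k ≤ n) :
    vk n k v = v (Tuple.sort v ⟨n - k, by omega⟩) := by
  rw [vk, dif_pos ⟨h1, h2⟩]

lemma card_ge {n m : ℕ} (hmn : m < n) (v : Fin n → ℝ≥0) :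
    m + 1 ≤ (univ.filter fun i => vk n (m+1) v ≤ v i).card := by
  set σ := Tuple.sort v with hσ
  have hmono := Tuple.monotone_sort v
  set a : Fin n := ⟨n - (m+1), by omega⟩ with ha
  have hsub : (Finset.Ici a).image σ ⊆ univ.filter fun i => vk n (m+1) v ≤ v i := by
    intro i hi
    simp only [Finset.mem_image, Finset.mem_Ici] at hi
    obtain ⟨j, hj, rfl⟩ := hi
    simp only [Finset.mem_filter, Finset.mem_univ, true_and]
    rw [vk_eq v (m+1) (by omega) (by omega)]
    exact hmono hj
  calc m + 1 = n - a.val := by simp [ha]; omega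
    _ = (Finset.Ici a).card := (Fin.card_Ici a).symm
    _ = ((Finset.Ici a).image σ).card := (Finset.card_image_of_injective _ σ.injective).symm
    _ ≤ _ := Finset.card_le_card hsub

lemma card_le {n m : ℕ} (hmn : m < n) (v : Fin n → ℝ≥0) :
    (univ.filter fun i => vk n (m+1) v < v i).card ≤ m := by
  set σ := Tuple.sort v with hσ
  have hmono := Tuple.monotone_sort v
  set a : Fin n := ⟨n - (m+1), by omega⟩ with ha
  have hsub : (Finset.Iic a).image σ ⊆ univ.filter fun i => v i ≤ vk n (m+1) v := by
    intro i hi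
    simp only [Finset.mem_image, Finset.mem_Iic] at hi
    obtain ⟨j, hj, rfl⟩ := hi
    simp only [Finset.mem_filter, Finset.mem_univ, true_and]
    rw [vk_eq v (m+1) (by omega) (by omega)]
    exact hmono hj
  have h1 : n - m ≤ (univ.filter fun i => v i ≤ vk n (m+1) v).card := by
    calc n - m = (Finset.Iic a).card := by rw [Fin.card_Iic]; simp [ha]; omega
      _ = ((Finset.Iic a).image σ).card := (Finset.card_image_of_injective _ σ.injective).symm
      _ ≤ _ := Finset.card_le_card hsub
  have h2 := Finset.card_filter_add_card_filter_not
    (s := (univ : Finset (Fin n))) (fun i => v i ≤ vk n (m+1) v)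
  have h3 : (univ.filter fun i => vk n (m+1) v < v i).card
      = (univ.filter fun i => ¬ (v i ≤ vk n (m+1) v)).card := by
    congr 1; ext i; simp [not_le]
  rw [h3]
  simp only [Finset.card_univ, Fintype.card_fin] at h2
  omega

lemma vk_n_le {n : ℕ} (hn : 0 < n) (v : Fin n → ℝ≥0) (i : Fin n) : vk n n v ≤ v i := by
  rw [vk_eq v n hn le_rfl]
  have hmono := Tuple.monotone_sort v
  have : v i = (v ∘ Tuple.sort v) ((Tuple.sort v).symm i) := by simp
  rw [this]
  exact hmono (by simp [Fin.le_def])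

lemma vk_anti {n : ℕ} (v : Fin n → ℝ≥0) {k l : ℕ} (h1 : 0 < k) (hkl : k ≤ l) (h2 : l ≤ n) :
    vk n l v ≤ vk n k v := by
  rw [vk_eq v l (by omega) h2, vk_eq v k h1 (by omega)]
  exact Tuple.monotone_sort v (by simp [Fin.le_def]; omega)

lemma tilde_iff {n m : ℕ} (hmn : m < n) (v : Fin n → ℝ≥0) :
    tilde n m v ↔ ∀ i, vk n (m+1) v ≤ v i := by
  constructor
  · intro h i
    rw [← h n (by omega) le_rfl]
    exact vk_n_le (by omega) v i
  · intro h k hk1 hk2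
    refine le_antisymm (vk_anti v (by omega) hk1 hk2) ?_
    rw [vk_eq v k (by omega) hk2]
    exact h _

lemma c_le_of {n m : ℕ} (hmn : m < n) {v : Fin n → ℝ≥0} {b : ℝ≥0} (s : Finset (Fin n))
    (hs : s.card ≤ m) (h : ∀ i, i ∉ s → v i ≤ b) : vk n (m+1) v ≤ b := by
  by_contra hb
  push_neg at hb
  have hsub : (univ.filter fun i => vk n (m+1) v ≤ v i) ⊆ s := by
    intro i hi
    simp only [Finset.mem_filter, Finset.mem_univ, true_and] at hi
    by_contra hns
    exact absurd (le_trans hi (h i hns)) (not_le.mpr hb)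
  have := (card_ge hmn v).trans (Finset.card_le_card hsub)
  omega

lemma sum_diff_two {n : ℕ} {F G : Fin n → ℝ} (i j : Fin n) (hij : i ≠ j)
    (h : ∀ k, k ≠ i → k ≠ j → F k = G k) :
    ∑ k, F k = (∑ k, G k) + (F i - G i) + (F j - G j) := by
  have key : ∑ k, (F k - G k) = (F i - G i) + (F j - G j) := by
    rw [← Finset.sum_subset (Finset.subset_univ ({i, j} : Finset (Fin n)))
      (by intro k _ hk; simp only [Finset.mem_insert, Finset.mem_singleton, not_or] at hk
          rw [h k hk.1 hk.2]; ring)]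
    rw [Finset.sum_insert (by simpa using hij), Finset.sum_singleton]
  have h2 := Finset.sum_sub_distrib (s := (univ : Finset (Fin n))) (f := F) (g := G)
  rw [key] at h2
  linarith

lemma sum_diff_one {n : ℕ} {F G : Fin n → ℝ} (j : Fin n)
    (h : ∀ k, k ≠ j → F k = G k) :
    ∑ k, F k = (∑ k, G k) + (F j - G j) := by
  have key : ∑ k, (F k - G k) = (F j - G j) := by
    rw [← Finset.sum_subset (Finset.subset_univ ({j} : Finset (Fin n)))
      (by intro k _ hk; simp only [Finset.mem_singleton] at hk; rw [h k hk]; ring)]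
    rw [Finset.sum_singleton]
  have h2 := Finset.sum_sub_distrib (s := (univ : Finset (Fin n))) (f := F) (g := G)
  rw [key] at h2
  linarith

lemma filter_update_true {n : ℕ} (x : Fin n → Bool) (j : Fin n) (hj : x j = false) :
    (univ.filter fun k => Function.update x j true k = true)
      = insert j (univ.filter fun k => x k = true) := by
  ext k
  simp only [Finset.mem_filter, Finset.mem_univ, true_and, Finset.mem_insert]
  rcases eq_or_ne k j with rfl | hne
  · simp
  · simp [Function.update_of_ne hne, hne]

lemma filter_update_false {n : ℕ} (x : Fin n → Bool) (i : Fin n) :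
    (univ.filter fun k => Function.update x i false k = true)
      = (univ.filter fun k => x k = true).erase i := by
  ext k
  simp only [Finset.mem_filter, Finset.mem_univ, true_and, Finset.mem_erase]
  rcases eq_or_ne k i with rfl | hne
  · simp
  · simp [Function.update_of_ne hne, hne]

lemma eff_swap {n m : ℕ} {v : Fin n → ℝ≥0} {x : Fin n → Bool}
    (hx : EffAlloc n m v x) (hc : (univ.filter fun k => x k = true).card ≤ m)
    {i j : Fin n} (hi : x i = true) (hj : x j = false) : v j ≤ v i := by
  have hij : i ≠ j := fun h => by rw [h, hj] at hi; exact absurd hi (by simp)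
  set y := Function.update (Function.update x i false) j true with hy
  have hyi : y i = false := by
    rw [hy, Function.update_of_ne hij, Function.update_self]
  have hyj : y j = true := by rw [hy, Function.update_self]
  have hyk : ∀ k, k ≠ i → k ≠ j → y k = x k := by
    intro k hki hkj
    rw [hy, Function.update_of_ne hkj, Function.update_of_ne hki]
  have hiMem : i ∈ univ.filter fun k => x k = true := by simp [hi]
  have hcardy : (univ.filter fun k => y k = true).card ≤ m := by
    rw [hy, filter_update_true (Function.update x i false) j
        (by rw [Function.update_of_ne hij.symm]; exact hj),
      filter_update_false]
    have hjNot : j ∉ (univ.filter fun k => x k = true).erase i := by simp [hj]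
    rw [Finset.card_insert_of_notMem hjNot, Finset.card_erase_of_mem hiMem]
    have hpos : 0 < (univ.filter fun k => x k = true).card := Finset.card_pos.mpr ⟨i, hiMem⟩
    omega
  have hsum := hx y hcardy
  have hdiff := sum_diff_two (F := fun k => if y k then (v k:ℝ) else 0)
     (G := fun k => if x k then (v k:ℝ) else 0) i j hij
     (fun k hki hkj => by simp only [hyk k hki hkj])
  simp only [hyi, hyj, hi, hj, if_true, if_false, Bool.false_eq_true] at hdiff
  rw [← NNReal.coe_le_coe]
  linarith

lemma eff_flip {n m : ℕ} {v : Fin n → ℝ≥0} {x : Fin n → Bool}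
    (hx : EffAlloc n m v x) (hc : (univ.filter fun k => x k = true).card < m)
    {j : Fin n} (hj : x j = false) : v j = 0 := by
  set y := Function.update x j true with hy
  have hyj : y j = true := by rw [hy, Function.update_self]
  have hyk : ∀ k, k ≠ j → y k = x k := fun k hkj => by
    rw [hy, Function.update_of_ne hkj]
  have hcardy : (univ.filter fun k => y k = true).card ≤ m := by
    rw [hy, filter_update_true x j hj]
    rw [Finset.card_insert_of_notMem (by simp [hj])]
    omega
  have hsum := hx y hcardy
  have hdiff := sum_diff_one (F := fun k => if y k then (v k:ℝ) else 0)
     (G := fun k => if x k then (v k:ℝ) else 0) j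
     (fun k hkj => by simp only [hyk k hkj])
  simp only [hyj, hj, if_true, if_false, Bool.false_eq_true] at hdiff
  have : (v j : ℝ) ≤ 0 := by linarith
  have h0 : (v j : ℝ) = 0 := le_antisymm this (v j).coe_nonneg
  exact_mod_cast h0

lemma exists_loser {n m : ℕ} (hmn : m < n) {x : Fin n → Bool}
    (hc : (univ.filter fun k => x k = true).card ≤ m) : ∃ j, x j = false := by
  by_contra h
  push_neg at h
  have : (univ.filter fun k => x k = true) = univ := by
    ext k; simp only [Finset.mem_filter, Finset.mem_univ, true_and, iff_true]
    cases hk : x k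
    · exact absurd hk (h k)
    · rfl
  rw [this, Finset.card_univ, Fintype.card_fin] at hc
  omega

lemma loser_le {n m : ℕ} (hmn : m < n) {v : Fin n → ℝ≥0} {x : Fin n → Bool}
    (hx : EffAlloc n m v x) (hc : (univ.filter fun k => x k = true).card ≤ m)
    {i : Fin n} (hi : x i = false) : v i ≤ vk n (m+1) v := by
  by_contra hlt
  push_neg at hlt
  have hvpos : 0 < v i := lt_of_le_of_lt (zero_le) hlt
  have hcard_eq : (univ.filter fun k => x k = true).card = m := by
    rcases lt_or_eq_of_le hc with h | h
    · exact absurd (eff_flip hx h hi) (by intro h0; rw [h0] at hvpos; exact lt_irrefl _ hvpos)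
    · exact h
  have hsub : insert i (univ.filter fun k => x k = true)
      ⊆ univ.filter fun k => vk n (m+1) v < v k := by
    intro k hk
    simp only [Finset.mem_insert, Finset.mem_filter, Finset.mem_univ, true_and] at hk ⊢
    rcases hk with rfl | hk
    · exact hlt
    · exact lt_of_lt_of_le hlt (eff_swap hx hc hk hi)
  have hni : i ∉ univ.filter fun k => x k = true := by simp [hi]
  have := Finset.card_le_card hsub
  rw [Finset.card_insert_of_notMem hni, hcard_eq] at this
  have := this.trans (card_le hmn v)
  omega

lemma winner_ge {n m : ℕ} (hmn : m < n) {v : Fin n → ℝ≥0} {x : Fin n → Bool}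
    (hx : EffAlloc n m v x) (hc : (univ.filter fun k => x k = true).card ≤ m)
    {i : Fin n} (hi : x i = true) : vk n (m+1) v ≤ v i := by
  by_contra hlt
  push_neg at hlt
  have hcard : (univ.filter fun k => x k = true).card
      < (univ.filter fun k => vk n (m+1) v ≤ v k).card :=
    lt_of_le_of_lt hc (lt_of_lt_of_le (Nat.lt_succ_self m) (card_ge hmn v))
  obtain ⟨j, hjmem, hjnot⟩ : ∃ j ∈ univ.filter (fun k => vk n (m+1) v ≤ v k),
      j ∉ univ.filter fun k => x k = true := by
    by_contra h
    push_neg at h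
    exact absurd (Finset.card_le_card h) (not_le.mpr hcard)
  simp only [Finset.mem_filter, Finset.mem_univ, true_and] at hjmem hjnot
  have hjf : x j = false := by
    cases hxx : x j
    · rfl
    · exact absurd hxx hjnot
  exact absurd (hjmem.trans (eff_swap hx hc hi hjf)) (not_le.mpr hlt)

variable {n m : ℕ} {f : Mechanism n m}

lemma evpab_eff (hf : IsEVPAB f) : Efficient f := by
  intro v
  by_cases ht : tilde n m v
  · exact ((hf v).1 ht).2.1
  · exact ((hf v).2 ht).2.1

lemma evpab_t_t (hf : IsEVPAB f) {v : Fin n → ℝ≥0} (ht : tilde n m v) (i : Fin n) :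
    f.t v i = if f.x v i = true then (vk n (m+1) v : ℝ) else 0 := by
  have h := ((hf v).1 ht).2.2 i
  exact h

lemma evpab_t_nt (hf : IsEVPAB f) {v : Fin n → ℝ≥0} (ht : ¬ tilde n m v) (i : Fin n) :
    f.t v i = if f.x v i = true then (v i : ℝ) else 0 := by
  have h := ((hf v).2 ht).2.2 i
  exact h

lemma util_eq (f : Mechanism n m) (v : Fin n → ℝ≥0) (i : Fin n) (w : ℝ≥0) :
    util (f.bundle v i) w = (if f.x v i = true then (w:ℝ) else 0) - f.t v i := rfl

lemma evpab_util_t (hf : IsEVPAB f) {v : Fin n → ℝ≥0} (ht : tilde n m v) (i : Fin n) (w : ℝ≥0) :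
    util (f.bundle v i) w
      = if f.x v i = true then (w:ℝ) - (vk n (m+1) v : ℝ) else 0 := by
  rw [util_eq, evpab_t_t hf ht]
  cases hx : f.x v i <;> simp [hx]

lemma evpab_util_nt (hf : IsEVPAB f) {v : Fin n → ℝ≥0} (ht : ¬ tilde n m v) (i : Fin n) (w : ℝ≥0) :
    util (f.bundle v i) w
      = if f.x v i = true then (w:ℝ) - (v i : ℝ) else 0 := by
  rw [util_eq, evpab_t_nt hf ht]
  cases hx : f.x v i <;> simp [hx]

lemma evpab_nonneg (hmn : m < n) (hf : IsEVPAB f) (v : Fin n → ℝ≥0) (i : Fin n) :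
    0 ≤ util (f.bundle v i) (v i) := by
  by_cases ht : tilde n m v
  · rw [evpab_util_t hf ht]
    cases hx : f.x v i
    · simp
    · rw [if_pos rfl]
      have := winner_ge hmn (evpab_eff hf v) (f.feasible v) hx
      have h2 : (vk n (m+1) v : ℝ) ≤ (v i : ℝ) := by exact_mod_cast this
      linarith
  · rw [evpab_util_nt hf ht]
    cases hx : f.x v i
    · simp
    · rw [if_pos rfl]; simp

lemma dominates (hmn : m < n) (hf : IsEVPAB f) (g : Mechanism n m) (hg : MemF g) :
    ∀ v i, util (g.bundle v i) (v i) ≤ util (f.bundle v i) (v i) := by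
  obtain ⟨hEE, -, hEffg, hIRg, hNSg⟩ := hg
  intro v i
  have hgfeas := g.feasible v
  obtain ⟨j₀, hj₀⟩ := exists_loser hmn hgfeas
  have hloser : ∀ j, g.x v j = false → g.t v j = 0 ∧ util (g.bundle v j) (v j) = 0 := by
    intro j hj
    have h1 := hIRg v j
    have h2 := hNSg v j
    rw [util_eq, hj] at h1
    simp only [Bool.false_eq_true, if_false, zero_sub, neg_nonneg, le_neg] at h1
    have ht : g.t v j = 0 := le_antisymm (by linarith) h2
    refine ⟨ht, ?_⟩
    rw [util_eq, hj, ht]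
    simp
  obtain ⟨z₀, hz⟩ := hEE v
  cases hz1 : z₀.1
  case false =>
    have hj := hz j₀
    rw [(hloser j₀ hj₀).2] at hj
    have ht0 : z₀.2 = 0 := by
      simp only [util, hz1, Bool.false_eq_true, if_false, zero_sub] at hj
      linarith
    have hgi : util (g.bundle v i) (v i) = 0 := by
      rw [hz i]; simp [util, hz1, ht0]
    rw [hgi]; exact evpab_nonneg hmn hf v i
  case true =>
    have hj := hz j₀
    rw [(hloser j₀ hj₀).2] at hj
    have ht0 : z₀.2 = (v j₀ : ℝ) := by
      simp only [util, hz1, if_true] at hj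
      linarith
    have hgutil : ∀ k, util (g.bundle v k) (v k) = (v k : ℝ) - z₀.2 := by
      intro k; rw [hz k]; simp [util, hz1]
    have hlosval : ∀ j, g.x v j = false → v j = v j₀ := by
      intro j hj'
      have h3 := hgutil j
      rw [(hloser j hj').2, ht0] at h3
      have h4 : (v j:ℝ) = (v j₀:ℝ) := by linarith
      exact_mod_cast h4
    rcases lt_or_eq_of_le hgfeas with hlt | hcm
    · have hall0 : ∀ j, g.x v j = false → v j = 0 := fun j hj' => eff_flip (hEffg v) hlt hj'
      have hC0 : vk n (m+1) v = 0 := by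
        refine le_antisymm (c_le_of hmn (univ.filter fun k => g.x v k = true) hgfeas ?_)
          (zero_le)
        intro k hk
        simp only [Finset.mem_filter, Finset.mem_univ, true_and, Bool.not_eq_true] at hk
        rw [hall0 k hk]
      have htil : tilde n m v := (tilde_iff hmn v).mpr fun k => by
        rw [hC0]; exact zero_le
      have hz20 : z₀.2 = 0 := by rw [ht0, hall0 j₀ hj₀]; simp
      rw [hgutil i, hz20, evpab_util_t hf htil, hC0]
      cases hx : f.x v i
      · have h5 := loser_le hmn (evpab_eff hf v) (f.feasible v) hx
        rw [hC0] at h5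
        have hvi : (v i:ℝ) = 0 := by exact_mod_cast le_antisymm h5 (zero_le)
        simp [hvi]
      · simp
    · have hCle : vk n (m+1) v ≤ v j₀ :=
        c_le_of hmn (univ.filter fun k => g.x v k = true) (le_of_eq hcm) (fun k hk => by
          simp only [Finset.mem_filter, Finset.mem_univ, true_and, Bool.not_eq_true] at hk
          exact le_of_eq (hlosval k hk))
      have hCge : v j₀ ≤ vk n (m+1) v := loser_le hmn (hEffg v) hgfeas hj₀
      have hC : vk n (m+1) v = v j₀ := le_antisymm hCle hCge
      have htil : tilde n m v := (tilde_iff hmn v).mpr fun k => by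
        cases hk : g.x v k
        · exact le_of_eq (hC.trans (hlosval k hk).symm)
        · exact winner_ge hmn (hEffg v) hgfeas hk
      rw [hgutil i, ht0, evpab_util_t hf htil, hC]
      cases hx : f.x v i
      · have h5 := loser_le hmn (evpab_eff hf v) (f.feasible v) hx
        rw [hC] at h5
        have h6 : (v i:ℝ) ≤ (v j₀:ℝ) := by exact_mod_cast h5
        simp only [Bool.false_eq_true, if_false]
        linarith
      · simp

lemma nom_evpab (hmn : m < n) (hf : IsEVPAB f) : NOM f := by
  intro i vi vi'
  rcases Nat.eq_zero_or_pos m with hm | hm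
  · subst hm
    have hz : ∀ (r : ℝ≥0) (w : Fin n → ℝ≥0),
        util (f.bundle (Function.update w i r) i) vi = 0 := by
      intro r w
      have hfeas := f.feasible (Function.update w i r)
      have hx : f.x (Function.update w i r) i = false := by
        cases hxx : f.x (Function.update w i r) i
        · rfl
        · exfalso
          have hmem : i ∈ univ.filter fun k => f.x (Function.update w i r) k = true := by
            simp [hxx]
          have := Finset.card_pos.mpr ⟨i, hmem⟩
          omega
      by_cases ht : tilde n 0 (Function.update w i r)
      · rw [evpab_util_t hf ht, hx]; simp
      · rw [evpab_util_nt hf ht, hx]; simp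
    constructor
    · simp only [hz]; exact le_refl _
    · simp only [hz]; exact le_refl _
  · have hub : ∀ (r : ℝ≥0) (w : Fin n → ℝ≥0),
        util (f.bundle (Function.update w i r) i) vi ≤ (vi:ℝ) := by
      intro r w
      by_cases ht : tilde n m (Function.update w i r)
      · rw [evpab_util_t hf ht]
        cases hx : f.x (Function.update w i r) i
        · simp
        · rw [if_pos rfl]
          exact sub_le_self _ (vk n (m+1) (Function.update w i r)).coe_nonneg
      · rw [evpab_util_nt hf ht]
        cases hx : f.x (Function.update w i r) i
        · simp
        · rw [if_pos rfl]
          exact sub_le_self _ (Function.update w i r i).coe_nonneg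
    have hbddA : ∀ r : ℝ≥0, BddAbove (Set.range fun w : Fin n → ℝ≥0 =>
        util (f.bundle (Function.update w i r) i) vi) := by
      intro r
      refine ⟨(vi:ℝ), ?_⟩
      rintro y ⟨w, rfl⟩
      exact hub r w
    have hlb : ∀ (r : ℝ≥0) (w : Fin n → ℝ≥0),
        -(r:ℝ) ≤ util (f.bundle (Function.update w i r) i) vi := by
      intro r w
      have hui : Function.update w i r i = r := Function.update_self i r w
      by_cases ht : tilde n m (Function.update w i r)
      · rw [evpab_util_t hf ht]
        cases hx : f.x (Function.update w i r) i
        · simp only [Bool.false_eq_true, if_false]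
          exact neg_nonpos.mpr r.coe_nonneg
        · rw [if_pos rfl]
          have hwin := winner_ge hmn (evpab_eff hf _) (f.feasible _) hx
          rw [hui] at hwin
          have h7 : (vk n (m+1) (Function.update w i r) : ℝ) ≤ (r:ℝ) := by exact_mod_cast hwin
          have h8 := vi.coe_nonneg
          linarith
      · rw [evpab_util_nt hf ht]
        cases hx : f.x (Function.update w i r) i
        · simp only [Bool.false_eq_true, if_false]
          exact neg_nonpos.mpr r.coe_nonneg
        · rw [if_pos rfl, hui]
          have h8 := vi.coe_nonneg
          linarith
    have hbddB : ∀ r : ℝ≥0, BddBelow (Set.range fun w : Fin n → ℝ≥0 =>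
        util (f.bundle (Function.update w i r) i) vi) := by
      intro r
      exact ⟨-(r:ℝ), by rintro y ⟨w, rfl⟩; exact hlb r w⟩
    constructor
    · refine le_trans (ciSup_le (hub vi')) ?_
      have hval : util (f.bundle (Function.update (fun _ => 0) i vi) i) vi = (vi:ℝ) := by
        have hui : Function.update (fun _ : Fin n => (0:ℝ≥0)) i vi i = vi := by simp
        have hC : vk n (m+1) (Function.update (fun _ : Fin n => (0:ℝ≥0)) i vi) = 0 := by
          refine le_antisymm (c_le_of hmn {i} (by rw [Finset.card_singleton]; omega) ?_) (zero_le)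
          intro k hk
          simp only [Finset.mem_singleton] at hk
          rw [Function.update_of_ne hk]
        have htl : tilde n m (Function.update (fun _ : Fin n => (0:ℝ≥0)) i vi) :=
          (tilde_iff hmn _).mpr fun k => by rw [hC]; exact zero_le
        rw [evpab_util_t hf htl]
        cases hx : f.x (Function.update (fun _ : Fin n => (0:ℝ≥0)) i vi) i
        · have h8 := loser_le hmn (evpab_eff hf _) (f.feasible _) hx
          rw [hC, hui] at h8
          have h9 : vi = 0 := le_antisymm h8 (zero_le)
          simp [h9]
        · rw [if_pos rfl, hC]; simp
      have h10 := le_ciSup (hbddA vi) (fun _ => (0:ℝ≥0))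
      rw [hval] at h10
      exact h10
    · refine le_trans (b := (0:ℝ)) ?_ (le_ciInf fun w => ?_)
      · have h0 : util (f.bundle (Function.update (fun _ => vi' + 1) i vi') i) vi = 0 := by
          have hx : f.x (Function.update (fun _ : Fin n => vi' + 1) i vi') i = false := by
            cases hxx : f.x (Function.update (fun _ : Fin n => vi' + 1) i vi') i
            · rfl
            · exfalso
              obtain ⟨j, hj⟩ := exists_loser hmn (f.feasible _)
              have hji : j ≠ i := fun h => by rw [h, hxx] at hj; simp at hj
              have hswap := eff_swap (evpab_eff hf _) (f.feasible _) hxx hj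
              rw [Function.update_of_ne hji, Function.update_self] at hswap
              simpa using hswap
          by_cases ht : tilde n m (Function.update (fun _ : Fin n => vi' + 1) i vi')
          · rw [evpab_util_t hf ht, hx]; simp
          · rw [evpab_util_nt hf ht, hx]; simp
        have h11 := ciInf_le (hbddB vi') (fun _ => vi' + 1)
        rw [h0] at h11
        exact h11
      · have hui : Function.update w i vi i = vi := Function.update_self i vi w
        by_cases ht : tilde n m (Function.update w i vi)
        · rw [evpab_util_t hf ht]
          cases hx : f.x (Function.update w i vi) i
          · simp
          · rw [if_pos rfl]
            have hwin := winner_ge hmn (evpab_eff hf _) (f.feasible _) hx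
            rw [hui] at hwin
            have h12 : (vk n (m+1) (Function.update w i vi):ℝ) ≤ (vi:ℝ) := by
              exact_mod_cast hwin
            linarith
        · rw [evpab_util_nt hf ht]
          cases hx : f.x (Function.update w i vi) i
          · simp
          · rw [if_pos rfl, hui]; simp

lemma memF_evpab (hmn : m < n) (hf : IsEVPAB f) : MemF f := by
  have hEf := evpab_eff hf
  refine ⟨?_, nom_evpab hmn hf, hEf, fun v i => evpab_nonneg hmn hf v i, ?_⟩
  · intro v
    by_cases ht : tilde n m v
    · refine ⟨(true, (vk n (m+1) v : ℝ)), fun i => ?_⟩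
      rw [evpab_util_t hf ht]
      cases hx : f.x v i
      · have h1 := loser_le hmn (hEf v) (f.feasible v) hx
        have h2 := (tilde_iff hmn v).mp ht i
        have h3 : v i = vk n (m+1) v := le_antisymm h1 h2
        simp [util, h3]
      · simp [util]
    · refine ⟨(false, 0), fun i => ?_⟩
      rw [evpab_util_nt hf ht]
      cases hx : f.x v i <;> simp [util]
  · intro v i
    by_cases ht : tilde n m v
    · rw [evpab_t_t hf ht]
      cases hx : f.x v i
      · simp
      · rw [if_pos rfl]
        exact (vk n (m+1) v).coe_nonneg
    · rw [evpab_t_nt hf ht]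
      cases hx : f.x v i
      · simp
      · rw [if_pos rfl]
        exact (v i).coe_nonneg

theorem stmt17 (n m : ℕ) (hmn : m < n) (f : Mechanism n m) (hf : IsEVPAB f) :
    MemF f ∧
    (∀ g : Mechanism n m, MemF g →
      ∀ v i, util (g.bundle v i) (v i) ≤ util (f.bundle v i) (v i)) ∧
    (∀ g : Mechanism n m, MemF g → ¬ IsEVPAB g →
      ¬ ∀ v i, util (f.bundle v i) (v i) ≤ util (g.bundle v i) (v i)) := by
  refine ⟨memF_evpab hmn hf, dominates hmn hf, ?_⟩
  intro g hg hne hdom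
  apply hne
  intro v
  have heq : ∀ i, util (g.bundle v i) (v i) = util (f.bundle v i) (v i) :=
    fun i => le_antisymm (dominates hmn hf g hg v i) (hdom v i)
  obtain ⟨-, -, hEffg, hIRg, hNSg⟩ := hg
  have hgfeas : (univ.filter fun i => (g.bundle v i).1 = true).card ≤ m := by
    exact g.feasible v
  have hgeff : EffAlloc n m v (fun i => (g.bundle v i).1) := by
    simpa [Mechanism.bundle] using hEffg v
  constructor
  · intro ht
    refine ⟨hgfeas, hgeff, fun i => ?_⟩
    show g.t v i = if g.x v i = true then (vk n (m+1) v : ℝ) else 0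
    cases hx : g.x v i
    · simp only [Bool.false_eq_true, if_false]
      have h1 := heq i
      rw [util_eq, hx] at h1
      simp only [Bool.false_eq_true, if_false, zero_sub] at h1
      have h2 := evpab_nonneg hmn hf v i
      have h3 := hNSg v i
      linarith
    · rw [if_pos rfl]
      have h1 := heq i
      rw [util_eq, hx, if_pos rfl] at h1
      cases hfx : f.x v i
      · rw [evpab_util_t hf ht i (v i), hfx] at h1
        simp only [Bool.false_eq_true, if_false] at h1
        have h5 := loser_le hmn (evpab_eff hf v) (f.feasible v) hfx
        have h6 := winner_ge hmn (hEffg v) (g.feasible v) hx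
        have h7 : v i = vk n (m+1) v := le_antisymm h5 h6
        have h8 : (v i : ℝ) = (vk n (m+1) v : ℝ) := by exact_mod_cast h7
        linarith
      · rw [evpab_util_t hf ht i (v i), hfx, if_pos rfl] at h1
        linarith
  · intro ht
    refine ⟨hgfeas, hgeff, fun i => ?_⟩
    show g.t v i = if g.x v i = true then (v i : ℝ) else 0
    have h1 := heq i
    rw [util_eq, evpab_util_nt hf ht i (v i)] at h1
    have h2 : (if f.x v i = true then (v i:ℝ) - (v i:ℝ) else 0) = 0 := by
      cases f.x v i <;> simp
    rw [h2] at h1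
    cases hx : g.x v i
    · rw [hx] at h1
      simp only [Bool.false_eq_true, if_false, zero_sub] at h1
      simp only [Bool.false_eq_true, if_false]
      linarith
    · rw [hx, if_pos rfl] at h1
      rw [if_pos rfl]
      linarith


end
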